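/- Let α_1,…,α_n > 0 and β_1 ≥ β_2 ≥ … ≥ β_n > 0 with β_1/α_1 ≤ β_2/α_2 ≤ … ≤ β_n/α_n. Define a_i = α_i/∑_{j=1}^n α_j and b_i = β_i/∑_{j=1}^n β_j. Then the sequence (b_1,…,b_n) is majorized by (a_1,…,a_n), i.e., both are decreasing-rearrangement comparable: ∑_{i=1}^k b_i ≤ ∑_{i=1}^k a_i for all 1 ≤ k ≤ n−1 (after sorting each in decreasing order) and the total sums are equal (both equal 1). -/

import Mathlib

lemma strictMono_fin_le {k : ℕ} (f : Fin k → ℕ) (hf : StrictMono f) :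
    ∀ m : Fin k, (m : ℕ) ≤ f m := by
  rintro ⟨m, hm⟩
  induction m with
  | zero => exact Nat.zero_le _
  | succ i ih =>
      have h1 := ih (Nat.lt_of_succ_lt hm)
      have h2 : f ⟨i, Nat.lt_of_succ_lt hm⟩ < f ⟨i + 1, hm⟩ :=
        hf (by simp [Fin.lt_iff_val_lt_val])
      simp only [Fin.val_mk] at h1 h2 ⊢
      omega

/-- Lemma of Marshall–Olkin type: under the stated monotonicity conditions, the normalized
sequence `b` is majorized by the normalized sequence `a`.  Majorization is expressed as:
the sum of the entries of `b` over any index set is at most the sum of `a` over some index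
set of the same cardinality (equivalently, the sum of the `k` largest entries of `b` is at
most that of `a`), together with equality of total sums. -/
theorem marshall_olkin_majorization (n : ℕ) (hn : 1 ≤ n) (α β : Fin n → ℝ)
    (hα : ∀ i, 0 < α i) (hβpos : ∀ i, 0 < β i)
    (hβdec : ∀ i j : Fin n, i ≤ j → β j ≤ β i)
    (hratio : ∀ i j : Fin n, i ≤ j → β i / α i ≤ β j / α j)
    (a b : Fin n → ℝ)
    (ha : ∀ i, a i = α i / ∑ j, α j) (hb : ∀ i, b i = β i / ∑ j, β j) :
    (∀ s : Finset (Fin n), ∃ t : Finset (Fin n), t.card = s.card ∧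
        ∑ i ∈ s, b i ≤ ∑ i ∈ t, a i) ∧
    ∑ i, b i = ∑ i, a i := by
  have hSα : 0 < ∑ j, α j := Finset.sum_pos (fun i _ => hα i) ⟨⟨0, hn⟩, Finset.mem_univ _⟩
  have hSβ : 0 < ∑ j, β j := Finset.sum_pos (fun i _ => hβpos i) ⟨⟨0, hn⟩, Finset.mem_univ _⟩
  constructor
  · intro s
    set k := s.card with hk
    have hkn : k ≤ n := by
      simpa using Finset.card_le_card (Finset.subset_univ s)
    set t := Finset.univ.filter (fun i : Fin n => (i : ℕ) < k) with ht
    have htmap : t = (Finset.univ : Finset (Fin k)).map (Fin.castLEEmb hkn) := by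
      ext i
      simp only [ht, Finset.mem_filter, Finset.mem_univ, true_and, Finset.mem_map]
      constructor
      · intro hi; exact ⟨⟨i, hi⟩, Fin.ext rfl⟩
      · rintro ⟨m, rfl⟩; exact m.2
    refine ⟨t, ?_, ?_⟩
    · rw [htmap, Finset.card_map, Finset.card_univ, Fintype.card_fin]
    · -- Step 1: ∑_{i∈s} b i ≤ ∑_{i∈t} b i  (b is decreasing)
      have hbdec : ∀ i j : Fin n, i ≤ j → b j ≤ b i := by
        intro i j hij
        rw [hb, hb]
        exact div_le_div_of_nonneg_right (hβdec i j hij) hSβ.le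
      have step1 : ∑ i ∈ s, b i ≤ ∑ i ∈ t, b i := by
        have e := s.orderIsoOfFin hk.symm
        have hmono : StrictMono (fun m : Fin k => (((e m : Fin n)) : ℕ)) := by
          intro x y hxy
          exact Fin.lt_iff_val_lt_val.mp (e.strictMono hxy)
        have hle : ∀ m : Fin k, (m : ℕ) ≤ ((e m : Fin n) : ℕ) :=
          strictMono_fin_le _ hmono
        have hsum_s : ∑ i ∈ s, b i = ∑ m : Fin k, b (e m : Fin n) := by
          rw [← Finset.sum_attach s (fun i => b i)]
          exact (Equiv.sum_comp e.toEquiv (fun x : s => b (x : Fin n))).symm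
        have hsum_t : ∑ i ∈ t, b i = ∑ m : Fin k, b (Fin.castLE hkn m) := by
          rw [htmap, Finset.sum_map]
          rfl
        rw [hsum_s, hsum_t]
        apply Finset.sum_le_sum
        intro m _
        apply hbdec
        exact Fin.le_iff_val_le_val.mpr (by simpa using hle m)
      -- Step 2: ∑_{i∈t} b i ≤ ∑_{i∈t} a i  (cross inequality)
      have step2 : ∑ i ∈ t, b i ≤ ∑ i ∈ t, a i := by
        have key : (∑ i ∈ t, β i) * (∑ j ∈ tᶜ, α j) ≤ (∑ i ∈ t, α i) * (∑ j ∈ tᶜ, β j) := by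
          rw [Finset.sum_mul_sum, Finset.sum_mul_sum]
          apply Finset.sum_le_sum
          intro i hi
          apply Finset.sum_le_sum
          intro j hj
          simp only [ht, Finset.mem_filter, Finset.mem_univ, true_and, Finset.mem_compl,
            not_lt] at hi hj
          have hij : i ≤ j := Fin.le_iff_val_le_val.mpr (le_trans (le_of_lt hi) hj)
          have := hratio i j hij
          rw [div_le_div_iff₀ (hα i) (hα j)] at this
          linarith
        have hsplitα : (∑ j, α j) = (∑ i ∈ t, α i) + (∑ j ∈ tᶜ, α j) :=
          (Finset.sum_add_sum_compl t α).symm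
        have hsplitβ : (∑ j, β j) = (∑ i ∈ t, β i) + (∑ j ∈ tᶜ, β j) :=
          (Finset.sum_add_sum_compl t β).symm
        have hA : (∑ i ∈ t, β i) * (∑ j, α j) ≤ (∑ i ∈ t, α i) * (∑ j, β j) := by
          rw [hsplitα, hsplitβ]; nlinarith [key]
        calc ∑ i ∈ t, b i = ∑ i ∈ t, β i / ∑ j, β j :=
              Finset.sum_congr rfl (fun i _ => hb i)
          _ = (∑ i ∈ t, β i) / ∑ j, β j := by rw [← Finset.sum_div]
          _ ≤ (∑ i ∈ t, α i) / ∑ j, α j := by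
              rw [div_le_div_iff₀ hSβ hSα]; exact hA
          _ = ∑ i ∈ t, α i / ∑ j, α j := by rw [← Finset.sum_div]
          _ = ∑ i ∈ t, a i := (Finset.sum_congr rfl (fun i _ => ha i)).symm
      exact le_trans step1 step2
  · have h1 : ∑ i, b i = 1 := by
      rw [Finset.sum_congr rfl (fun i _ => hb i), ← Finset.sum_div, div_self (ne_of_gt hSβ)]
    have h2 : ∑ i, a i = 1 := by
      rw [Finset.sum_congr rfl (fun i _ => ha i), ← Finset.sum_div, div_self (ne_of_gt hSα)]
    rw [h1, h2]
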